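/- For any sequence of probability vectors (w_t) over K experts and loss vectors l_t in [0,1]^K for t = 1..T, if w_t is the exponential-weights distribution with learning rate eta_t = sqrt(8*log(K)/t) (time-varying), then the regret satisfies sum_t <w_t, l_t> - min_i sum_t l_{i,t} <= 2*sqrt(T*log(K)/2) + sqrt(log(K)/8). -/

import Mathlib

open Finset Real


lemma hoeff_scalar {p x : ℝ} (hp0 : 0 ≤ p) (hp1 : p ≤ 1) (hx : 0 ≤ x) :
    Real.log (1 - p + p * Real.exp (-x)) ≤ -(p * x) + x ^ 2 / 8 := by
  have hD : ∀ y : ℝ, 0 < 1 - p + p * Real.exp (-y) := by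
    intro y
    have he := Real.exp_pos (-y)
    rcases lt_or_eq_of_le hp1 with h | h
    · nlinarith [mul_nonneg hp0 he.le]
    · subst h; simpa using he
  set F : ℝ → ℝ := fun y => Real.log (1 - p + p * Real.exp (-y)) + p * y - y ^ 2 / 8 with hFdef
  set G : ℝ → ℝ := fun y =>
    -(p * Real.exp (-y)) / (1 - p + p * Real.exp (-y)) + p - y / 4 with hGdef
  have hDe : ∀ y : ℝ, HasDerivAt (fun y => 1 - p + p * Real.exp (-y))
      (-(p * Real.exp (-y))) y := by
    intro y
    have h1 : HasDerivAt (fun y : ℝ => Real.exp (-y)) (-Real.exp (-y)) y := by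
      simpa [Function.comp_def] using ((Real.hasDerivAt_exp (-y)).comp y ((hasDerivAt_id y).neg))
    simpa [mul_comm, mul_neg] using (h1.const_mul p).const_add (1 - p)
  have hF : ∀ y : ℝ, HasDerivAt F (G y) y := by
    intro y
    have h1 := (hDe y).log (hD y).ne'
    have h2 : HasDerivAt (fun y : ℝ => p * y) p y := by
      simpa using (hasDerivAt_id y).const_mul p
    have h3 : HasDerivAt (fun y : ℝ => y ^ 2 / 8) (y / 4) y := by
      have := (hasDerivAt_pow 2 y).div_const 8
      refine this.congr_deriv ?_
      ring
    exact (h1.add h2).sub h3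
  have hG : ∀ y : ℝ, HasDerivAt G
      ((p * Real.exp (-y) * (1 - p + p * Real.exp (-y)) - (p * Real.exp (-y)) ^ 2) /
        (1 - p + p * Real.exp (-y)) ^ 2 - 1 / 4) y := by
    intro y
    have hnum : HasDerivAt (fun y : ℝ => -(p * Real.exp (-y))) (p * Real.exp (-y)) y := by
      have h1 : HasDerivAt (fun y : ℝ => Real.exp (-y)) (-Real.exp (-y)) y := by
        simpa [Function.comp_def] using ((Real.hasDerivAt_exp (-y)).comp y ((hasDerivAt_id y).neg))
      simpa [mul_neg, Pi.neg_def] using ((h1.const_mul p).neg)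
    have hq := hnum.div (hDe y) (hD y).ne'
    have h4 : HasDerivAt (fun y : ℝ => y / 4) (1 / 4) y := by
      simpa using (hasDerivAt_id y).div_const 4
    have := (hq.add_const p).sub h4
    refine this.congr_deriv ?_
    ring
  have hH : ∀ y : ℝ,
      (p * Real.exp (-y) * (1 - p + p * Real.exp (-y)) - (p * Real.exp (-y)) ^ 2) /
        (1 - p + p * Real.exp (-y)) ^ 2 - 1 / 4 ≤ 0 := by
    intro y
    have hDy := hD y
    have h1 : (p * Real.exp (-y) * (1 - p + p * Real.exp (-y)) - (p * Real.exp (-y)) ^ 2) /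
        (1 - p + p * Real.exp (-y)) ^ 2 ≤ 1 / 4 := by
      rw [div_le_iff₀ (by positivity)]
      nlinarith [sq_nonneg ((1 - p + p * Real.exp (-y)) - 2 * (p * Real.exp (-y)))]
    linarith
  have hGanti : Antitone G := by
    apply antitone_of_deriv_nonpos (fun y => (hG y).differentiableAt)
    intro y
    rw [(hG y).deriv]
    exact hH y
  have hG0 : G 0 = 0 := by
    simp [hGdef]
  have hGle : ∀ y : ℝ, 0 ≤ y → G y ≤ 0 := fun y hy => hG0 ▸ hGanti hy
  have hdiffF : Differentiable ℝ F := fun y => (hF y).differentiableAt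
  have hFanti : AntitoneOn F (Set.Ici 0) := by
    apply antitoneOn_of_deriv_nonpos (convex_Ici 0) hdiffF.continuous.continuousOn
      hdiffF.differentiableOn
    intro y hy
    rw [interior_Ici] at hy
    rw [(hF y).deriv]
    exact hGle y (le_of_lt hy)
  have hF0 : F 0 = 0 := by simp [hFdef]
  have := hFanti (Set.self_mem_Ici) (Set.mem_Ici.2 hx) hx
  rw [hF0] at this
  have hFx : Real.log (1 - p + p * Real.exp (-x)) + p * x - x ^ 2 / 8 ≤ 0 := this
  linarith


lemma hoeff_sum {K : ℕ} (wt li : Fin K → ℝ) (hw : ∀ i, 0 ≤ wt i)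
    (hws : ∑ i, wt i = 1) (hli : ∀ i, li i ∈ Set.Icc (0:ℝ) 1) {x : ℝ} (hx : 0 ≤ x) :
    Real.log (∑ i, wt i * Real.exp (-x * li i)) ≤ -(x * ∑ i, wt i * li i) + x ^ 2 / 8 := by
  set p := ∑ i, wt i * li i with hpdef
  have hp0 : 0 ≤ p := Finset.sum_nonneg fun i _ => mul_nonneg (hw i) (hli i).1
  have hp1 : p ≤ 1 := by
    calc p ≤ ∑ i, wt i := Finset.sum_le_sum fun i _ => by
            nlinarith [(hli i).2, hw i, (hli i).1]
      _ = 1 := hws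
  have hterm : ∀ i, Real.exp (-x * li i) ≤ (1 - li i) + li i * Real.exp (-x) := by
    intro i
    have h := convexOn_exp.2 (Set.mem_univ (0:ℝ)) (Set.mem_univ (-x))
      (by linarith [(hli i).2] : (0:ℝ) ≤ 1 - li i) (hli i).1 (by ring)
    simpa [smul_eq_mul, mul_comm] using h
  have key : ∑ i, wt i * Real.exp (-x * li i) ≤ 1 - p + p * Real.exp (-x) := by
    have h1 : ∑ i, wt i * Real.exp (-x * li i)
        ≤ ∑ i, wt i * ((1 - li i) + li i * Real.exp (-x)) :=
      Finset.sum_le_sum fun i _ => mul_le_mul_of_nonneg_left (hterm i) (hw i)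
    have h2 : ∑ i, wt i * ((1 - li i) + li i * Real.exp (-x))
        = 1 - p + p * Real.exp (-x) := by
      simp only [mul_add, mul_sub, mul_one, ← mul_assoc]
      rw [Finset.sum_add_distrib, Finset.sum_sub_distrib, ← Finset.sum_mul, hws, hpdef]
    linarith
  obtain ⟨i0, hi0⟩ : ∃ i, 0 < wt i := by
    by_contra h
    push_neg at h
    have : (∑ i, wt i) ≤ 0 := Finset.sum_nonpos fun i _ => h i
    rw [hws] at this; linarith
  have hKpos : 0 < ∑ i, wt i * Real.exp (-x * li i) :=
    Finset.sum_pos' (fun i _ => mul_nonneg (hw i) (Real.exp_pos _).le)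
      ⟨i0, Finset.mem_univ i0, mul_pos hi0 (Real.exp_pos _)⟩
  calc Real.log (∑ i, wt i * Real.exp (-x * li i))
      ≤ Real.log (1 - p + p * Real.exp (-x)) := by
        apply Real.log_le_log hKpos key
    _ ≤ -(p * x) + x ^ 2 / 8 := hoeff_scalar hp0 hp1 hx
    _ = -(x * p) + x ^ 2 / 8 := by ring

lemma phi_mono {K : ℕ} (hK : 2 ≤ K) (c : Fin K → ℝ) {a b : ℝ} (ha : 0 < a) (hab : a ≤ b) :
    (Real.log (∑ i, Real.exp (-a * c i)) - Real.log K) / a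
      ≤ (Real.log (∑ i, Real.exp (-b * c i)) - Real.log K) / b := by
  have hb : 0 < b := lt_of_lt_of_le ha hab
  have hKpos : (0:ℝ) < K := by positivity
  haveI : Nonempty (Fin K) := ⟨⟨0, by omega⟩⟩
  have hSa : (0:ℝ) < ∑ i, Real.exp (-a * c i) :=
    Finset.sum_pos (fun i _ => Real.exp_pos _) Finset.univ_nonempty
  have hSb : (0:ℝ) < ∑ i, Real.exp (-b * c i) :=
    Finset.sum_pos (fun i _ => Real.exp_pos _) Finset.univ_nonempty
  have hp : (1:ℝ) ≤ b / a := (one_le_div ha).2 hab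
  have hjen := Real.rpow_arith_mean_le_arith_mean_rpow Finset.univ
    (fun _ : Fin K => 1 / (K:ℝ)) (fun i => Real.exp (-a * c i))
    (fun i _ => by positivity)
    (by rw [Finset.sum_const]; simp; field_simp)
    (fun i _ => (Real.exp_pos _).le) hp
  have hrw : ∀ i : Fin K, Real.exp (-a * c i) ^ (b / a) = Real.exp (-b * c i) := by
    intro i
    rw [← Real.exp_mul]
    congr 1
    field_simp
  simp only [hrw] at hjen
  have hsum1 : ∀ f : Fin K → ℝ, ∑ i, 1 / (K:ℝ) * f i = (∑ i, f i) / K := by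
    intro f
    rw [← Finset.mul_sum, one_div, inv_mul_eq_div]
  rw [hsum1, hsum1] at hjen
  have hQa : (0:ℝ) < (∑ i, Real.exp (-a * c i)) / K := by positivity
  have hQb : (0:ℝ) < (∑ i, Real.exp (-b * c i)) / K := by positivity
  have hlog : (b / a) * Real.log ((∑ i, Real.exp (-a * c i)) / K)
      ≤ Real.log ((∑ i, Real.exp (-b * c i)) / K) := by
    rw [← Real.log_rpow hQa]
    exact Real.log_le_log (Real.rpow_pos_of_pos hQa _) hjen
  rw [Real.log_div hSa.ne' hKpos.ne', Real.log_div hSb.ne' hKpos.ne'] at hlog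
  rw [div_le_div_iff₀ ha hb]
  have := mul_le_mul_of_nonneg_right hlog ha.le
  calc (Real.log (∑ i, Real.exp (-a * c i)) - Real.log K) * b
      = b / a * (Real.log (∑ i, Real.exp (-a * c i)) - Real.log K) * a := by
        field_simp
    _ ≤ (Real.log (∑ i, Real.exp (-b * c i)) - Real.log K) * a := this

lemma sqrt_inv_sum_le (T : ℕ) :
    ∑ n ∈ Finset.range T, (1:ℝ) / Real.sqrt (n + 1) ≤ 2 * Real.sqrt T := by
  induction T with
  | zero => simp
  | succ n ih =>
    rw [Finset.sum_range_succ]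
    have hb : (0:ℝ) < Real.sqrt (n + 1) := Real.sqrt_pos.2 (by positivity)
    have ha : (0:ℝ) ≤ Real.sqrt n := Real.sqrt_nonneg n
    have h1 : Real.sqrt n ^ 2 = (n:ℝ) := Real.sq_sqrt (by positivity)
    have h2 : Real.sqrt ((n:ℝ) + 1) ^ 2 = (n:ℝ) + 1 := Real.sq_sqrt (by positivity)
    have key : 1 / Real.sqrt ((n:ℝ) + 1) ≤ 2 * Real.sqrt ((n:ℝ)+1) - 2 * Real.sqrt n := by
      rw [div_le_iff₀ hb]
      nlinarith [sq_nonneg (Real.sqrt ((n:ℝ)+1) - Real.sqrt n)]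
    push_cast
    linarith [ih]

/-- Regret bound for exponential weights with time-varying learning rate
`η_t = √(8 log K / t)`. -/
theorem exp_weights_time_varying_regret (K T : ℕ) (hK : 2 ≤ K) (hT : 1 ≤ T)
    (l : Fin T → Fin K → ℝ) (hl : ∀ t i, l t i ∈ Set.Icc (0:ℝ) 1)
    (η : ℕ → ℝ) (hη : ∀ t : ℕ, η t = Real.sqrt (8 * Real.log K / t))
    (w : Fin T → Fin K → ℝ)
    (hw : ∀ t i, w t i =
      Real.exp (-η (t.1 + 1) * ∑ s ∈ univ.filter (· < t), l s i) /
        ∑ j, Real.exp (-η (t.1 + 1) * ∑ s ∈ univ.filter (· < t), l s j)) :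
    (∑ t, ∑ i, w t i * l t i) - (⨅ i, ∑ t, l t i) ≤
      2 * Real.sqrt (T * Real.log K / 2) + Real.sqrt (Real.log K / 8) := by
  haveI : Nonempty (Fin K) := ⟨⟨0, by omega⟩⟩
  have hK1 : (1:ℝ) < K := by exact_mod_cast lt_of_lt_of_le one_lt_two hK
  set κ := Real.log K with hκdef
  have hκ : 0 < κ := Real.log_pos hK1
  have hηpos : ∀ n : ℕ, 0 < n → 0 < η n := by
    intro n hn
    have hn' : (0:ℝ) < n := by exact_mod_cast hn
    rw [hη]
    apply Real.sqrt_pos.2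
    positivity
  have hηanti : ∀ n : ℕ, 0 < n → η (n + 1) ≤ η n := by
    intro n hn
    have hn' : (0:ℝ) < n := by exact_mod_cast hn
    rw [hη, hη]
    apply Real.sqrt_le_sqrt
    rw [div_le_div_iff₀ (by positivity) hn']
    push_cast
    nlinarith [hκ]
  set C : Fin K → ℕ → ℝ :=
    fun i n => ∑ s ∈ univ.filter (fun s : Fin T => s.1 < n), l s i with hCdef
  set Z : ℝ → ℕ → ℝ := fun e n => ∑ i, Real.exp (-e * C i n) with hZdef
  have hZpos : ∀ e n, 0 < Z e n := fun e n =>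
    Finset.sum_pos (fun i _ => Real.exp_pos _) Finset.univ_nonempty
  have hC0 : ∀ i, C i 0 = 0 := by intro i; simp [hCdef]
  have hCT : ∀ i, C i T = ∑ t, l t i := by
    intro i
    simp only [hCdef]
    congr 1
    exact Finset.filter_true_of_mem fun s _ => s.isLt
  have hCsucc : ∀ (t : Fin T) (i : Fin K), C i (t.1 + 1) = C i t.1 + l t i := by
    intro t i
    have hins : (univ.filter (fun s : Fin T => s.1 < t.1 + 1))
        = insert t (univ.filter (fun s : Fin T => s.1 < t.1)) := by
      ext s
      simp [Fin.ext_iff]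
      omega
    simp only [hCdef]
    rw [hins, Finset.sum_insert (by simp)]
    ring
  have hwt : ∀ (t : Fin T) (i : Fin K),
      w t i = Real.exp (-η (t.1 + 1) * C i t.1) / Z (η (t.1 + 1)) t.1 := by
    intro t i
    rw [hw t i]
    have hfil : (univ.filter (· < t)) = univ.filter (fun s : Fin T => s.1 < t.1) := by
      ext s
      simp only [Finset.mem_filter, Finset.mem_univ, true_and, Fin.lt_def]
    rw [hfil]
  -- per-step inequality
  have step : ∀ t : Fin T, ∑ i, w t i * l t i ≤
      (Real.log (Z (η (t.1 + 1)) t.1) - Real.log (Z (η (t.1 + 1)) (t.1 + 1))) / η (t.1 + 1)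
        + η (t.1 + 1) / 8 := by
    intro t
    have he : 0 < η (t.1 + 1) := hηpos _ (Nat.succ_pos _)
    have hZt := hZpos (η (t.1 + 1)) t.1
    have hZt1 := hZpos (η (t.1 + 1)) (t.1 + 1)
    have hwpos : ∀ i, 0 ≤ w t i := fun i => by rw [hwt t i]; positivity
    have hwsum : ∑ i, w t i = 1 := by
      rw [Finset.sum_congr rfl fun i _ => hwt t i, ← Finset.sum_div]
      have h0 : ∑ i, Real.exp (-η (t.1 + 1) * C i t.1) = Z (η (t.1 + 1)) t.1 := rfl
      rw [h0, div_self hZt.ne']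
    have hprod : Z (η (t.1 + 1)) (t.1 + 1)
        = Z (η (t.1 + 1)) t.1 * ∑ i, w t i * Real.exp (-η (t.1 + 1) * l t i) := by
      rw [Finset.mul_sum]
      show ∑ i, Real.exp (-η (t.1 + 1) * C i (t.1 + 1)) = _
      apply Finset.sum_congr rfl
      intro i _
      rw [hwt t i, hCsucc t i]
      field_simp
      rw [← Real.exp_add]
      congr 1
      ring
    have hS : 0 < ∑ i, w t i * Real.exp (-η (t.1 + 1) * l t i) := by
      rcases mul_pos_iff.1 (hprod ▸ hZt1) with ⟨_, h⟩ | ⟨h, _⟩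
      · exact h
      · linarith
    have hsplit : Real.log (Z (η (t.1 + 1)) (t.1 + 1)) = Real.log (Z (η (t.1 + 1)) t.1)
        + Real.log (∑ i, w t i * Real.exp (-η (t.1 + 1) * l t i)) := by
      rw [hprod, Real.log_mul hZt.ne' hS.ne']
    have hh := hoeff_sum (w t) (l t) hwpos hwsum (fun i => hl t i) he.le
    have hgoal2 : ∑ i, w t i * l t i - η (t.1 + 1) / 8
        ≤ (-(Real.log (∑ i, w t i * Real.exp (-η (t.1 + 1) * l t i)))) / η (t.1 + 1) := by
      rw [le_div_iff₀ he]
      nlinarith [hh]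
    have hfin : (Real.log (Z (η (t.1 + 1)) t.1) - Real.log (Z (η (t.1 + 1)) (t.1 + 1)))
        / η (t.1 + 1)
        = (-(Real.log (∑ i, w t i * Real.exp (-η (t.1 + 1) * l t i)))) / η (t.1 + 1) := by
      rw [hsplit]
      ring
    rw [hfin]
    linarith
  -- potential function and telescoping
  set φ : ℕ → ℝ := fun n => (Real.log (Z (η (n + 1)) n) - κ) / η (n + 1) with hφdef
  have hmono : ∀ t : Fin T,
      (Real.log (Z (η (t.1 + 1)) t.1) - Real.log (Z (η (t.1 + 1)) (t.1 + 1))) / η (t.1 + 1)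
        ≤ φ t.1 - φ (t.1 + 1) := by
    intro t
    have h1 : φ (t.1 + 1) ≤ (Real.log (Z (η (t.1 + 1)) (t.1 + 1)) - κ) / η (t.1 + 1) := by
      simp only [hφdef, hZdef, hκdef]
      exact phi_mono hK (fun i => C i (t.1 + 1)) (hηpos (t.1 + 1 + 1) (by omega))
        (hηanti (t.1 + 1) (by omega))
    have h2 : (Real.log (Z (η (t.1 + 1)) t.1) - Real.log (Z (η (t.1 + 1)) (t.1 + 1)))
        / η (t.1 + 1)
        = φ t.1 - (Real.log (Z (η (t.1 + 1)) (t.1 + 1)) - κ) / η (t.1 + 1) := by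
      simp only [hφdef]
      ring
    rw [h2]
    linarith
  have htel : ∑ t : Fin T, (φ t.1 - φ (t.1 + 1)) = φ 0 - φ T :=
    (Fin.sum_univ_eq_sum_range (fun n => φ n - φ (n + 1)) T).trans
      (Finset.sum_range_sub' φ T)
  have hφ0 : φ 0 = 0 := by
    have hZ0 : Z (η 1) 0 = K := by
      simp [hZdef, hC0]
    simp [hφdef, hZ0, hκdef]
  have hφT : ∀ i : Fin K, -φ T - κ / η (T + 1) ≤ C i T := by
    intro i
    have hηT := hηpos (T + 1) (by omega)
    have hsingle : Real.exp (-η (T + 1) * C i T) ≤ Z (η (T + 1)) T := by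
      exact Finset.single_le_sum (f := fun j => Real.exp (-η (T + 1) * C j T))
        (fun j _ => (Real.exp_pos _).le) (Finset.mem_univ i)
    have hlog : -η (T + 1) * C i T ≤ Real.log (Z (η (T + 1)) T) := by
      rw [← Real.log_exp (-η (T + 1) * C i T)]
      exact Real.log_le_log (Real.exp_pos _) hsingle
    have heq : -φ T - κ / η (T + 1)
        = (-(Real.log (Z (η (T + 1)) T))) / η (T + 1) := by
      simp only [hφdef]
      ring
    rw [heq, div_le_iff₀ hηT]
    nlinarith [hlog]
  -- combine
  have main : ∑ t : Fin T, ∑ i, w t i * l t i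
      ≤ (φ 0 - φ T) + ∑ t : Fin T, η (t.1 + 1) / 8 := by
    calc ∑ t : Fin T, ∑ i, w t i * l t i
        ≤ ∑ t : Fin T, ((Real.log (Z (η (t.1 + 1)) t.1)
            - Real.log (Z (η (t.1 + 1)) (t.1 + 1))) / η (t.1 + 1) + η (t.1 + 1) / 8) :=
          Finset.sum_le_sum fun t _ => step t
      _ ≤ ∑ t : Fin T, ((φ t.1 - φ (t.1 + 1)) + η (t.1 + 1) / 8) :=
          Finset.sum_le_sum fun t _ => by linarith [hmono t]
      _ = (∑ t : Fin T, (φ t.1 - φ (t.1 + 1))) + ∑ t : Fin T, η (t.1 + 1) / 8 :=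
          Finset.sum_add_distrib
      _ = (φ 0 - φ T) + ∑ t : Fin T, η (t.1 + 1) / 8 := by rw [htel]
  have hsumη : ∑ t : Fin T, η (t.1 + 1) / 8 ≤ Real.sqrt (T * κ / 2) := by
    have h1 : ∑ t : Fin T, η (t.1 + 1) / 8 = ∑ n ∈ Finset.range T, η (n + 1) / 8 :=
      Fin.sum_univ_eq_sum_range (fun n => η (n + 1) / 8) T
    have h2 : ∀ n : ℕ, η (n + 1) / 8 = Real.sqrt (8 * κ) / 8 * (1 / Real.sqrt (n + 1)) := by
      intro n
      rw [hη, Real.sqrt_div (by positivity : (0:ℝ) ≤ 8 * κ)]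
      push_cast
      ring
    rw [h1]
    calc ∑ n ∈ Finset.range T, η (n + 1) / 8
        = Real.sqrt (8 * κ) / 8 * ∑ n ∈ Finset.range T, (1:ℝ) / Real.sqrt (n + 1) := by
          rw [Finset.mul_sum]
          exact Finset.sum_congr rfl fun n _ => h2 n
      _ ≤ Real.sqrt (8 * κ) / 8 * (2 * Real.sqrt T) :=
          mul_le_mul_of_nonneg_left (sqrt_inv_sum_le T) (by positivity)
      _ ≤ Real.sqrt (T * κ / 2) := by
          rw [show Real.sqrt (8 * κ) / 8 * (2 * Real.sqrt T)
            = Real.sqrt (8 * κ) * Real.sqrt T / 4 by ring]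
          rw [← Real.sqrt_mul (by positivity)]
          rw [show (4:ℝ) = Real.sqrt 16 by
            rw [show (16:ℝ) = 4 ^ 2 by norm_num, Real.sqrt_sq (by norm_num)]]
          rw [← Real.sqrt_div (by positivity)]
          apply Real.sqrt_le_sqrt
          nlinarith [hκ]
  have hA : κ / η (T + 1) ≤ Real.sqrt (T * κ / 2) := by
    have hηT := hηpos (T + 1) (by omega)
    have hA0 : 0 ≤ κ / η (T + 1) := by positivity
    have hsq : η (T + 1) ^ 2 = 8 * κ / (T + 1) := by
      rw [hη]
      push_cast
      exact Real.sq_sqrt (by positivity)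
    apply (Real.le_sqrt hA0 (by positivity)).2
    rw [div_pow, hsq, div_le_iff₀ (by positivity), div_mul_div_comm,
      le_div_iff₀ (by positivity)]
    have hT' : (1:ℝ) ≤ T := by exact_mod_cast hT
    nlinarith [hT', mul_pos hκ hκ]
  have hinf : (⨅ i, ∑ t, l t i) = ⨅ i, C i T := iInf_congr fun i => (hCT i).symm
  have hinf2 : -φ T - κ / η (T + 1) ≤ ⨅ i, C i T := le_ciInf fun i => hφT i
  rw [hinf]
  have hs8 : 0 ≤ Real.sqrt (κ / 8) := Real.sqrt_nonneg _
  linarith [main, hφ0, hsumη, hA, hinf2, hs8]
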